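/- Let g ∈ ℂ^N have all entries nonzero and f ∈ ℂ^N with f_0 > 0, and set R = diag(g) T(f) diag(conj(g)). Then ‖g‖² ‖f‖ = (∑_{n=0}^{N-1} R_{n,n}) · sqrt( 1 + ∑_{k=1}^{N-1} (1/(N-k)) ∑_{n=0}^{N-k-1} |R_{n+k,n}|² / (R_{n+k,n+k} R_{n,n}) ). -/

import Mathlib

open Complex Matrix

/-- The Hermitian Toeplitz matrix generated by `f`. -/
noncomputable def ToepMat {N : ℕ} (f : Fin N → ℂ) : Matrix (Fin N) (Fin N) ℂ :=
  fun m n =>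
    if (n : ℕ) ≤ (m : ℕ) then
      f ⟨(m : ℕ) - n, Nat.lt_of_le_of_lt (Nat.sub_le _ _) m.isLt⟩
    else
      starRingEnd ℂ (f ⟨(n : ℕ) - m, Nat.lt_of_le_of_lt (Nat.sub_le _ _) n.isLt⟩)

theorem stmt2 {N : ℕ} (hN : 0 < N)
    (g f : Fin N → ℂ) (hg : ∀ n, g n ≠ 0)
    (hf0 : (f ⟨0, hN⟩).im = 0) (hf0pos : 0 < (f ⟨0, hN⟩).re)
    (R : Matrix (Fin N) (Fin N) ℂ)
    (hR : R = Matrix.diagonal g * ToepMat f * Matrix.diagonal (fun n => starRingEnd ℂ (g n))) :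
    (∑ n : Fin N, ‖g n‖^2) * Real.sqrt (∑ k : Fin N, ‖f k‖^2) =
      (∑ n : Fin N, (R n n).re) *
      Real.sqrt (1 + ∑ k ∈ Finset.Ico 1 N, (1 / ((N : ℝ) - k)) *
        ∑ n ∈ Finset.range (N - k), if h : n + k < N then
          ‖R ⟨n + k, h⟩ ⟨n, by omega⟩‖^2 /
            ((R ⟨n + k, h⟩ ⟨n + k, h⟩).re * (R ⟨n, by omega⟩ ⟨n, by omega⟩).re)
        else 0) := by
  set c : ℝ := (f ⟨0, hN⟩).re with hc
  have hcpos : 0 < c := hf0pos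
  have hcne : c ≠ 0 := ne_of_gt hcpos
  have hc0 : f ⟨0, hN⟩ = (c : ℂ) := Complex.ext rfl (by simp [hf0])
  -- diagonal entries
  have hdiag : ∀ n : Fin N, (R n n).re = (‖g n‖)^2 * c := by
    intro n
    rw [hR, Matrix.mul_diagonal, Matrix.diagonal_mul]
    have hT : ToepMat f n n = (c : ℂ) := by
      simp only [ToepMat, le_refl, if_true]
      rw [show (⟨(n:ℕ) - (n:ℕ), Nat.lt_of_le_of_lt (Nat.sub_le _ _) n.isLt⟩ : Fin N) = ⟨0, hN⟩
        from Fin.ext (Nat.sub_self _)]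
      exact hc0
    rw [hT, mul_comm (g n), mul_assoc, Complex.mul_conj, ← Complex.ofReal_mul]
    simp [Complex.sq_norm, mul_comm]
  -- off-diagonal term
  have habs2 : ∀ (n k : ℕ) (h : n + k < N) (h2 : n < N) (hk : k < N),
      (‖R ⟨n + k, h⟩ ⟨n, h2⟩‖)^2
        = (‖g ⟨n+k, h⟩‖)^2 * (‖f ⟨k, hk⟩‖)^2
          * (‖g ⟨n, h2⟩‖)^2 := by
    intro n k h h2 hk
    rw [hR, Matrix.mul_diagonal, Matrix.diagonal_mul]
    have hT : ToepMat f ⟨n + k, h⟩ ⟨n, h2⟩ = f ⟨k, hk⟩ := by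
      simp only [ToepMat]
      rw [if_pos (by simp)]
      congr 1
      exact Fin.ext (by simp)
    rw [hT]
    simp [_root_.map_mul, mul_pow]
  have hgpos : ∀ n : Fin N, 0 < (‖g n‖)^2 := fun n =>
    pow_pos (norm_pos_iff.mpr (hg n)) 2
  -- each dyadic term equals |f_k|^2 / c^2
  have hterm : ∀ (n k : ℕ) (h : n + k < N) (h2 : n < N) (hk : k < N),
      (‖R ⟨n + k, h⟩ ⟨n, h2⟩‖)^2 /
        ((R ⟨n + k, h⟩ ⟨n + k, h⟩).re * (R ⟨n, h2⟩ ⟨n, h2⟩).re)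
        = (‖f ⟨k, hk⟩‖)^2 / c^2 := by
    intro n k h h2 hk
    rw [habs2 n k h h2 hk, hdiag, hdiag]
    have h1 := ne_of_gt (hgpos ⟨n + k, h⟩)
    have h2' := ne_of_gt (hgpos ⟨n, h2⟩)
    have h3 := norm_ne_zero_iff.mpr (hg ⟨n + k, h⟩)
    have h4 := norm_ne_zero_iff.mpr (hg ⟨n, h2⟩)
    field_simp
  -- sum of diagonal
  have hsumdiag : (∑ n : Fin N, (R n n).re) = (∑ n : Fin N, (‖g n‖)^2) * c := by
    rw [Finset.sum_mul]
    exact Finset.sum_congr rfl fun n _ => hdiag n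
  -- the big sum
  have hbig : (1 + ∑ k ∈ Finset.Ico 1 N, (1 / ((N : ℝ) - k)) *
        ∑ n ∈ Finset.range (N - k), if h : n + k < N then
          (‖R ⟨n + k, h⟩ ⟨n, by omega⟩‖)^2 /
            ((R ⟨n + k, h⟩ ⟨n + k, h⟩).re * (R ⟨n, by omega⟩ ⟨n, by omega⟩).re)
        else 0)
      = (∑ k : Fin N, (‖f k‖)^2) / c^2 := by
    have hφ : ∀ k ∈ Finset.Ico 1 N, (1 / ((N : ℝ) - k)) *
        (∑ n ∈ Finset.range (N - k), if h : n + k < N then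
          (‖R ⟨n + k, h⟩ ⟨n, by omega⟩‖)^2 /
            ((R ⟨n + k, h⟩ ⟨n + k, h⟩).re * (R ⟨n, by omega⟩ ⟨n, by omega⟩).re)
        else 0)
        = (if h : k < N then (‖f ⟨k, h⟩‖)^2 else 0) / c^2 := by
      intro k hkmem
      obtain ⟨hk1, hkN⟩ := Finset.mem_Ico.mp hkmem
      rw [dif_pos hkN]
      have hin : (∑ n ∈ Finset.range (N - k), if h : n + k < N then
          (‖R ⟨n + k, h⟩ ⟨n, by omega⟩‖)^2 /
            ((R ⟨n + k, h⟩ ⟨n + k, h⟩).re * (R ⟨n, by omega⟩ ⟨n, by omega⟩).re)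
        else 0) = (N - k : ℕ) * ((‖f ⟨k, hkN⟩‖)^2 / c^2) := by
        rw [Finset.sum_congr rfl (fun n hn => ?_), Finset.sum_const, nsmul_eq_mul,
          Finset.card_range]
        have hn' : n < N - k := Finset.mem_range.mp hn
        have h : n + k < N := by omega
        rw [dif_pos h, hterm n k h (by omega) hkN]
      rw [hin, Nat.cast_sub (le_of_lt hkN)]
      have hne : (N : ℝ) - k ≠ 0 := by
        have : (k : ℝ) < N := by exact_mod_cast hkN
        linarith
      field_simp
    rw [Finset.sum_congr rfl hφ]
    have hsf : (∑ k : Fin N, (‖f k‖)^2)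
        = ∑ k ∈ Finset.range N, (if h : k < N then (‖f ⟨k, h⟩‖)^2 else 0) := by
      rw [← Fin.sum_univ_eq_sum_range]
      exact Finset.sum_congr rfl fun k _ => by rw [dif_pos k.isLt]
    rw [hsf, Finset.range_eq_Ico, Finset.sum_eq_sum_Ico_succ_bot hN]
    rw [dif_pos hN, hc0]
    rw [Complex.norm_real, Real.norm_eq_abs, abs_of_pos hcpos, add_div, Finset.sum_div,
      div_self (pow_ne_zero 2 hcne)]
  rw [hsumdiag, hbig, Real.sqrt_div (Finset.sum_nonneg fun k _ => sq_nonneg _),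
    Real.sqrt_sq hcpos.le]
  field_simp
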